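/- arXiv:2604.26228 — 8 statements merged into one kernel-verified Lean document; each statement's English description precedes it below -/
import Mathlib

section
/- With d = -proj_{aff(B_K)}(0) for the unit generators u^1,...,u^p of the polyhedral cone K, if v ∈ R^n satisfies ‖v‖ ≤ ‖d‖², then d + v lies in the polar cone K°. -/
open scoped RealInnerProductSpace

theorem stmt2 {n p : ℕ} (u : Fin p → EuclideanSpace ℝ (Fin n))
    (hu : ∀ i, ‖u i‖ = 1)
    (d : EuclideanSpace ℝ (Fin n))
    (hmem : -d ∈ affineSpan ℝ (Set.range u))
    (horth : ∀ x ∈ affineSpan ℝ (Set.range u), ⟪x + d, d⟫ = 0)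
    (v : EuclideanSpace ℝ (Fin n)) (hv : ‖v‖ ≤ ‖d‖ ^ 2) :
    ∀ z ∈ {z : EuclideanSpace ℝ (Fin n) |
        ∃ c : Fin p → ℝ, (∀ i, 0 ≤ c i) ∧ z = ∑ i, c i • u i},
      ⟪d + v, z⟫ ≤ 0 := by
  rintro z ⟨c, hc, rfl⟩
  rw [inner_sum]
  apply Finset.sum_nonpos
  intro i _
  rw [real_inner_smul_right]
  have hkey : ⟪d + v, u i⟫ ≤ 0 := by
    have hui : u i ∈ affineSpan ℝ (Set.range u) :=
      subset_affineSpan ℝ _ ⟨i, rfl⟩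
    have h1 := horth (u i) hui
    rw [inner_add_left, real_inner_comm, real_inner_self_eq_norm_sq] at h1
    have h2 : ⟪d, u i⟫ = -‖d‖ ^ 2 := by linarith
    have h3 : ⟪v, u i⟫ ≤ ‖d‖ ^ 2 := by
      calc ⟪v, u i⟫ ≤ ‖v‖ * ‖u i‖ := real_inner_le_norm v (u i)
        _ = ‖v‖ := by rw [hu i, mul_one]
        _ ≤ ‖d‖ ^ 2 := hv
    rw [inner_add_left]
    linarith
  exact mul_nonpos_of_nonneg_of_nonpos (hc i) hkey
end

section
/- Let K = cone{u^1,...,u^p} with unit generators, d = -proj_{aff(B_K)}(0), and for w ∈ R^n \ {0} define ρ_K(w) = sup{t ≥ 0 : d + t w ∈ K°}. Then ρ_K(w) = +∞ if max_i ⟨w,u^i⟩ ≤ 0, and ρ_K(w) = ‖d‖² / max_i ⟨w,u^i⟩ otherwise. -/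
open scoped RealInnerProductSpace ENNReal

theorem stmt3 {n p : ℕ} (hp : 0 < p) (u : Fin p → EuclideanSpace ℝ (Fin n))
    (hu : ∀ i, ‖u i‖ = 1)
    (d : EuclideanSpace ℝ (Fin n))
    (hmem : -d ∈ affineSpan ℝ (Set.range u))
    (horth : ∀ x ∈ affineSpan ℝ (Set.range u), ⟪x + d, d⟫ = 0)
    (w : EuclideanSpace ℝ (Fin n)) (hw : w ≠ 0) :
    ((∀ i, ⟪w, u i⟫ ≤ 0) →
      (⨆ t ∈ {t : ℝ | 0 ≤ t ∧ ∀ i, ⟪d + t • w, u i⟫ ≤ 0}, ENNReal.ofReal t) = ⊤) ∧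
    (¬ (∀ i, ⟪w, u i⟫ ≤ 0) →
      (⨆ t ∈ {t : ℝ | 0 ≤ t ∧ ∀ i, ⟪d + t • w, u i⟫ ≤ 0}, ENNReal.ofReal t) =
        ENNReal.ofReal (‖d‖ ^ 2 /
          (Finset.univ.sup' (Finset.univ_nonempty_iff.mpr (Fin.pos_iff_nonempty.mp hp))
            fun i => ⟪w, u i⟫))) := by
  have key : ∀ (t : ℝ) (i : Fin p), ⟪d + t • w, u i⟫ = t * ⟪w, u i⟫ - ‖d‖ ^ 2 := by
    intro t i
    have h := horth (u i) (mem_affineSpan ℝ ⟨i, rfl⟩)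
    rw [inner_add_left, real_inner_self_eq_norm_sq] at h
    have hd : ⟪d, u i⟫ = -‖d‖ ^ 2 := by
      rw [real_inner_comm]; linarith
    rw [inner_add_left, real_inner_smul_left, hd]; ring
  have hmemS : ∀ t : ℝ, t ∈ {t : ℝ | 0 ≤ t ∧ ∀ i, ⟪d + t • w, u i⟫ ≤ 0} ↔
      0 ≤ t ∧ ∀ i, t * ⟪w, u i⟫ ≤ ‖d‖ ^ 2 := by
    intro t
    simp only [Set.mem_setOf_eq, key]
    constructor
    · rintro ⟨h0, h1⟩; exact ⟨h0, fun i => by linarith [h1 i]⟩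
    · rintro ⟨h0, h1⟩; exact ⟨h0, fun i => by linarith [h1 i]⟩
  constructor
  · intro h
    apply le_antisymm le_top
    rw [← ENNReal.iSup_natCast]
    refine iSup_le fun m => ?_
    have hm : (m : ℝ) ∈ {t : ℝ | 0 ≤ t ∧ ∀ i, ⟪d + t • w, u i⟫ ≤ 0} := by
      rw [hmemS]
      refine ⟨Nat.cast_nonneg m, fun i => ?_⟩
      have : (m : ℝ) * ⟪w, u i⟫ ≤ 0 :=
        mul_nonpos_of_nonneg_of_nonpos (Nat.cast_nonneg m) (h i)
      exact le_trans this (sq_nonneg _)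
    calc ((m : ℕ) : ℝ≥0∞) = ENNReal.ofReal (m : ℝ) := by
          simp [ENNReal.ofReal_natCast]
      _ ≤ _ := le_iSup₂ (f := fun t _ => ENNReal.ofReal t) (m : ℝ) hm
  · intro h
    push_neg at h
    obtain ⟨i₀, hi₀⟩ := h
    set ne : Finset.Nonempty (Finset.univ : Finset (Fin p)) :=
      Finset.univ_nonempty_iff.mpr (Fin.pos_iff_nonempty.mp hp)
    set M : ℝ := Finset.univ.sup' ne fun i => ⟪w, u i⟫ with hM
    have hMpos : 0 < M := by
      have := Finset.le_sup' (f := fun i => ⟪w, u i⟫) (b := i₀) (Finset.mem_univ i₀)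
      exact lt_of_lt_of_le hi₀ this
    set c : ℝ := ‖d‖ ^ 2 / M with hc
    have hc0 : 0 ≤ c := div_nonneg (sq_nonneg _) hMpos.le
    apply le_antisymm
    · refine iSup₂_le fun t ht => ?_
      rw [hmemS] at ht
      obtain ⟨i₁, _, hi₁⟩ := Finset.exists_mem_eq_sup' ne fun i => ⟪w, u i⟫
      have : t * M ≤ ‖d‖ ^ 2 := by rw [hM, hi₁]; exact ht.2 i₁
      exact ENNReal.ofReal_le_ofReal ((le_div_iff₀ hMpos).mpr this)
    · have hcS : c ∈ {t : ℝ | 0 ≤ t ∧ ∀ i, ⟪d + t • w, u i⟫ ≤ 0} := by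
        rw [hmemS]
        refine ⟨hc0, fun i => ?_⟩
        have h1 : c * ⟪w, u i⟫ ≤ c * M :=
          mul_le_mul_of_nonneg_left (Finset.le_sup' (f := fun i => ⟪w, u i⟫) (Finset.mem_univ i)) hc0
        have h2 : c * M = ‖d‖ ^ 2 := div_mul_cancel₀ _ hMpos.ne'
        linarith
      exact le_iSup₂ (f := fun t _ => ENNReal.ofReal t) c hcS
end

section
/- Let u^1,...,u^p be linearly independent unit vectors in R^n with Gram matrix M, and d = -proj_{aff{u^1,...,u^p}}(0). Then λ_min(M)/p ≤ ‖d‖² ≤ λ_max(M)/p ≤ 1, where λ_min and λ_max are the smallest and largest eigenvalues of M. -/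
open scoped RealInnerProductSpace

/-- Auxiliary: view a plain vector as an element of Euclidean space. -/
noncomputable def evAux {p : ℕ} (v : Fin p → ℝ) : EuclideanSpace ℝ (Fin p) := WithLp.toLp 2 v

lemma evAux_inner_mulVec {p : ℕ} (M : Matrix (Fin p) (Fin p) ℝ) (hM : M.IsHermitian)
    (x y : EuclideanSpace ℝ (Fin p)) :
    ⟪x, evAux (M.mulVec y)⟫ = ⟪evAux (M.mulVec x), y⟫ := by
  have hsym : M.transpose = M := by
    rw [← Matrix.conjTranspose_eq_transpose_of_trivial]; exact hM.eq
  simp only [PiLp.inner_apply, RCLike.inner_apply, starRingEnd_apply, star_trivial, evAux]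
  calc ∑ i, (M.mulVec y) i * x i = dotProduct x (M.mulVec y) := by rw [dotProduct_comm]; rfl
    _ = dotProduct (M.mulVec x) y := by
        rw [Matrix.dotProduct_mulVec, ← Matrix.mulVec_transpose, hsym]
    _ = ∑ i, y i * (M.mulVec x) i := by rw [dotProduct_comm]; rfl

theorem stmt5 {n p : ℕ} (hp : 0 < p) (u : Fin p → EuclideanSpace ℝ (Fin n))
    (hu : ∀ i, ‖u i‖ = 1) (hli : LinearIndependent ℝ u)
    (hM : (Matrix.of fun i j => ⟪u i, u j⟫ : Matrix (Fin p) (Fin p) ℝ).IsHermitian)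
    (d : EuclideanSpace ℝ (Fin n))
    (hmem : -d ∈ affineSpan ℝ (Set.range u))
    (horth : ∀ x ∈ affineSpan ℝ (Set.range u), ⟪x + d, d⟫ = 0) :
    (Finset.univ.inf' (Finset.univ_nonempty_iff.mpr (Fin.pos_iff_nonempty.mp hp))
        hM.eigenvalues) / p ≤ ‖d‖ ^ 2 ∧
    ‖d‖ ^ 2 ≤ (Finset.univ.sup' (Finset.univ_nonempty_iff.mpr (Fin.pos_iff_nonempty.mp hp))
        hM.eigenvalues) / p ∧
    (Finset.univ.sup' (Finset.univ_nonempty_iff.mpr (Fin.pos_iff_nonempty.mp hp))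
        hM.eigenvalues) / p ≤ 1 := by
  classical
  set M : Matrix (Fin p) (Fin p) ℝ := Matrix.of fun i j => ⟪u i, u j⟫ with hMdef
  set t : ℝ := ‖d‖ ^ 2 with htdef
  have ht0 : (0:ℝ) ≤ t := sq_nonneg _
  -- the coefficients of the affine combination
  obtain ⟨c, hc1, hcd⟩ := eq_affineCombination_of_mem_affineSpan_of_fintype hmem
  rw [Finset.univ.affineCombination_eq_linear_combination u c hc1] at hcd
  -- inner products with d
  have hud : ∀ i, ⟪u i, d⟫ = -t := by
    intro i
    have h := horth (u i) (subset_affineSpan ℝ (Set.range u) (Set.mem_range_self i))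
    rw [inner_add_left, real_inner_self_eq_norm_sq] at h
    linarith
  -- M *ᵥ c = const t
  have hMc : M.mulVec c = fun _ => t := by
    funext i
    have : M.mulVec c i = ⟪u i, ∑ j, c j • u j⟫ := by
      simp only [Matrix.mulVec, dotProduct, hMdef, Matrix.of_apply, inner_sum,
        real_inner_smul_right]
      exact Finset.sum_congr rfl fun j _ => mul_comm _ _
    rw [this, ← hcd, inner_neg_right, hud i]
    ring
  -- M is positive definite
  have hMpd : M.PosDef := by
    refine Matrix.posDef_iff_dotProduct_mulVec.mpr ⟨hM, fun x hx => ?_⟩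
    have key : dotProduct (star x) (M.mulVec x)
        = ⟪∑ i, x i • u i, ∑ j, x j • u j⟫ := by
      simp only [dotProduct, Matrix.mulVec, star_trivial, hMdef, Matrix.of_apply,
        sum_inner, inner_sum, real_inner_smul_left, real_inner_smul_right, Finset.mul_sum]
      rw [Finset.sum_comm]
      congr 1; ext i; congr 1; ext j; ring
    rw [key, real_inner_self_eq_norm_sq]
    have hne : ∑ i, x i • u i ≠ 0 := by
      intro h
      apply hx
      ext i
      exact Fintype.linearIndependent_iff.mp hli x h i
    have := norm_pos_iff.mpr hne
    positivity
  have hev_pos : ∀ k, 0 < hM.eigenvalues k := fun k => hMpd.eigenvalues_pos k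
  -- trace of M is p
  have htrace : M.trace = (p : ℝ) := by
    have hdiag : ∀ i, M i i = 1 := by
      intro i
      rw [show M i i = ⟪u i, u i⟫ from rfl, real_inner_self_eq_norm_sq, hu i, one_pow]
    simp [Matrix.trace, Matrix.diag, hdiag]
  have htrace' : ∑ k, hM.eigenvalues k = (p : ℝ) := by
    rw [← htrace]
    conv_rhs => rw [hM.spectral_theorem, Unitary.conjStarAlgAut_apply]
    rw [Matrix.trace_mul_cycle,
      show (star (hM.eigenvectorUnitary : Matrix (Fin p) (Fin p) ℝ)) *
        (hM.eigenvectorUnitary : Matrix (Fin p) (Fin p) ℝ) = 1 from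
        (Matrix.mem_unitaryGroup_iff').mp hM.eigenvectorUnitary.2]
    simp [Matrix.trace_diagonal]
  -- spectral decomposition computations
  set B := hM.eigenvectorBasis with hBdef
  set e : EuclideanSpace ℝ (Fin p) := evAux (fun _ => 1) with hedef
  set cE : EuclideanSpace ℝ (Fin p) := evAux c with hcEdef
  set a : Fin p → ℝ := fun k => ⟪(B k : EuclideanSpace ℝ (Fin p)), e⟫ with hadef
  set b : Fin p → ℝ := fun k => ⟪(B k : EuclideanSpace ℝ (Fin p)), cE⟫ with hbdef
  have hec : ⟪e, cE⟫ = 1 := by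
    simp [hedef, hcEdef, PiLp.inner_apply, RCLike.inner_apply, evAux, hc1]
  have hee : ⟪e, e⟫ = (p : ℝ) := by
    simp [hedef, PiLp.inner_apply, RCLike.inner_apply, evAux, EuclideanSpace.norm_eq]
  have sum1 : ∑ k, a k * b k = 1 := by
    rw [← hec, ← B.sum_inner_mul_inner e cE]
    congr 1; ext k
    rw [hadef, real_inner_comm]
  have sumsq : ∑ k, a k ^ 2 = (p : ℝ) := by
    rw [← hee, ← B.sum_inner_mul_inner e e]
    congr 1; ext k
    rw [hadef]; simp [real_inner_comm (B k) e, sq]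
  have eig : ∀ k, hM.eigenvalues k * b k = t * a k := by
    intro k
    have h1 : ⟪(B k : EuclideanSpace ℝ (Fin p)), evAux (M.mulVec cE)⟫
        = ⟪evAux (M.mulVec (B k)), cE⟫ := evAux_inner_mulVec M hM _ _
    have h2 : evAux (M.mulVec (B k)) = hM.eigenvalues k • (B k : EuclideanSpace ℝ (Fin p)) := by
      have := hM.mulVec_eigenvectorBasis k
      rw [hBdef]
      exact congrArg evAux this
    have h3 : evAux (M.mulVec cE) = t • e := by
      have : M.mulVec c = fun _ => t := hMc
      rw [hcEdef]
      show evAux (M.mulVec c) = t • e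
      rw [this]
      refine PiLp.ext fun i => ?_
      simp [evAux, hedef]
    rw [h3, h2] at h1
    rw [inner_smul_right, real_inner_smul_left] at h1
    rw [hbdef, hadef]
    exact (h1.symm)
  -- b k in terms of a k
  have hb : ∀ k, b k = t * a k / hM.eigenvalues k := by
    intro k
    rw [eq_div_iff (hev_pos k).ne', mul_comm]
    exact eig k
  set S : ℝ := ∑ k, a k ^ 2 / hM.eigenvalues k with hSdef
  have hTS : t * S = 1 := by
    rw [← sum1, hSdef, Finset.mul_sum]
    congr 1; ext k
    rw [hb k]
    have := (hev_pos k).ne'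
    field_simp
  -- eigenvalue extremes
  set lmin : ℝ := Finset.univ.inf' (Finset.univ_nonempty_iff.mpr (Fin.pos_iff_nonempty.mp hp))
      hM.eigenvalues with hlmin
  set lmax : ℝ := Finset.univ.sup' (Finset.univ_nonempty_iff.mpr (Fin.pos_iff_nonempty.mp hp))
      hM.eigenvalues with hlmax
  have hmem_min : ∃ k, lmin = hM.eigenvalues k := by
    obtain ⟨k, _, hk⟩ := Finset.exists_mem_eq_inf' _ hM.eigenvalues
    exact ⟨k, hk⟩
  have hmem_max : ∃ k, lmax = hM.eigenvalues k := by
    obtain ⟨k, _, hk⟩ := Finset.exists_mem_eq_sup' _ hM.eigenvalues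
    exact ⟨k, hk⟩
  have hlmin_pos : 0 < lmin := by
    obtain ⟨k, hk⟩ := hmem_min; rw [hk]; exact hev_pos k
  have hle_min : ∀ k, lmin ≤ hM.eigenvalues k := fun k =>
    Finset.inf'_le _ (Finset.mem_univ k)
  have hle_max : ∀ k, hM.eigenvalues k ≤ lmax := fun k =>
    Finset.le_sup' _ (Finset.mem_univ k)
  have hlmax_pos : 0 < lmax := by
    obtain ⟨k, hk⟩ := hmem_max; rw [hk]; exact hev_pos k
  have hp' : (0:ℝ) < p := by exact_mod_cast hp
  -- bounds on S
  have hS_upper : S ≤ (p:ℝ) / lmin := by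
    rw [hSdef, ← sumsq, Finset.sum_div]
    apply Finset.sum_le_sum
    intro k _
    exact div_le_div_of_nonneg_left (sq_nonneg _) hlmin_pos (hle_min k)
  have hS_lower : (p:ℝ) / lmax ≤ S := by
    rw [hSdef, ← sumsq, Finset.sum_div]
    apply Finset.sum_le_sum
    intro k _
    exact div_le_div_of_nonneg_left (sq_nonneg _) (hev_pos k) (hle_max k)
  -- λmax ≤ p
  have hlmax_le : lmax ≤ (p:ℝ) := by
    obtain ⟨k, hk⟩ := hmem_max
    rw [hk, ← htrace']
    exact Finset.single_le_sum (fun j _ => (hev_pos j).le) (Finset.mem_univ k)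
  refine ⟨?_, ?_, ?_⟩
  · -- lmin / p ≤ t
    rw [div_le_iff₀ hp']
    have h1 : 1 ≤ t * ((p:ℝ)/lmin) := by
      calc (1:ℝ) = t * S := hTS.symm
        _ ≤ t * ((p:ℝ)/lmin) := mul_le_mul_of_nonneg_left hS_upper ht0
    have h2 := mul_le_mul_of_nonneg_right h1 hlmin_pos.le
    rw [one_mul] at h2
    calc lmin ≤ t * ((p:ℝ)/lmin) * lmin := h2
      _ = t * p := by field_simp
  · -- t ≤ lmax / p
    rw [le_div_iff₀ hp']
    have h1 : t * ((p:ℝ)/lmax) ≤ 1 := by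
      calc t * ((p:ℝ)/lmax) ≤ t * S := mul_le_mul_of_nonneg_left hS_lower ht0
        _ = 1 := hTS
    have h2 := mul_le_mul_of_nonneg_right h1 hlmax_pos.le
    rw [one_mul] at h2
    calc t * (p:ℝ) = t * ((p:ℝ)/lmax) * lmax := by field_simp
      _ ≤ lmax := h2
  · exact (div_le_one hp').mpr hlmax_le
end

section
/- Let K ⊂ R^n be a nontrivial closed convex pointed cone with E_K the set of unit vectors on extreme rays, and suppose 0 ∉ closure(aff(E_K)). Set d = -proj_{closure(aff(E_K))}(0). Then d ≠ 0, ⟨d, u⟩ = -‖d‖² for every u ∈ E_K, and d + v ∈ K° whenever ‖v‖ ≤ ‖d‖². -/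
open scoped RealInnerProductSpace

/-- The set of unit vectors spanning extreme rays of a cone `K`. -/
def extremalSection {E : Type*} [NormedAddCommGroup E] [InnerProductSpace ℝ E]
    (K : Set E) : Set E :=
  {u | ‖u‖ = 1 ∧ IsExtreme ℝ K {x | ∃ t : ℝ, 0 ≤ t ∧ x = t • u}}

/-- `d` is the circumcentric direction of `K`, i.e. `-d` is the orthogonal projection of the
origin onto the closure of the affine hull of the extremal section of `K`. -/
def IsCircumcentricDir {E : Type*} [NormedAddCommGroup E] [InnerProductSpace ℝ E]
    (K : Set E) (d : E) : Prop :=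
  -d ∈ closure (affineSpan ℝ (extremalSection K) : Set E) ∧
    ∀ x ∈ closure (affineSpan ℝ (extremalSection K) : Set E), ⟪x + d, d⟫ = 0

section Aux

variable {n : ℕ}

/-- A pointed closed convex cone admits a linear functional positive on `K \ {0}`,
uniformly: `c * ‖x‖ ≤ ⟪e, x⟫` on `K`. -/
lemma exists_pos_dual (K : Set (EuclideanSpace ℝ (Fin n)))
    (hclosed : IsClosed K) (hconv : Convex ℝ K)
    (hcone : ∀ t : ℝ, 0 ≤ t → ∀ x ∈ K, t • x ∈ K)
    (hpointed : K ∩ (-K) ⊆ {0}) :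
    ∃ e : EuclideanSpace ℝ (Fin n), ∃ c : ℝ, 0 < c ∧ ∀ x ∈ K, c * ‖x‖ ≤ ⟪e, x⟫ := by
  classical
  by_cases hne : (K ∩ Metric.sphere (0 : EuclideanSpace ℝ (Fin n)) 1).Nonempty
  · obtain ⟨x₀, hx₀K, hx₀S⟩ := hne
    have h0K : (0 : EuclideanSpace ℝ (Fin n)) ∈ K := by
      simpa using hcone 0 le_rfl x₀ hx₀K
    -- K as a convex cone
    let KC : ConvexCone ℝ (EuclideanSpace ℝ (Fin n)) :=
      { carrier := K
        smul_mem' := fun {c} hc {x} hx => hcone c hc.le x hx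
        add_mem' := fun {x} hx {y} hy => by
          have h := hconv hx hy (by norm_num : (0:ℝ) ≤ 1/2) (by norm_num : (0:ℝ) ≤ 1/2)
            (by norm_num)
          have h2 := hcone 2 (by norm_num) _ h
          have heq2 : (2:ℝ) • ((1/2:ℝ) • x + (1/2:ℝ) • y) = x + y := by
            rw [smul_add, smul_smul, smul_smul]
            norm_num
          rwa [heq2] at h2 }
    -- separation: for every nonzero x in K there is a dual vector positive at x
    have sep : ∀ x ∈ K, x ≠ 0 →
        ∃ y : EuclideanSpace ℝ (Fin n), (∀ z ∈ K, 0 ≤ ⟪y, z⟫) ∧ 0 < ⟪y, x⟫ := by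
      intro x hx hx0
      have hnx : -x ∉ KC := by
        intro hnx
        apply hx0
        have : x ∈ K ∩ (-K) := ⟨hx, by simpa using (show -x ∈ K from hnx)⟩
        simpa using hpointed this
      obtain ⟨y, hy1, hy2⟩ :=
        ProperCone.hyperplane_separation' (⟨KC.toPointedCone
          (ConvexCone.Pointed.of_nonempty_of_isClosed ⟨0, h0K⟩ hclosed), hclosed⟩ :
          ProperCone ℝ (EuclideanSpace ℝ (Fin n))) hnx
      refine ⟨y, fun z hz => ?_, ?_⟩
      · rw [real_inner_comm]; exact hy1 z hz
      · rw [inner_neg_left, real_inner_comm] at hy2; linarith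
    -- compactness of the unit-sphere section
    set S : Set (EuclideanSpace ℝ (Fin n)) :=
      K ∩ Metric.sphere (0 : EuclideanSpace ℝ (Fin n)) 1 with hS
    have hScomp : IsCompact S := (isCompact_sphere 0 1).inter_left hclosed
    set D : Set (EuclideanSpace ℝ (Fin n)) := {y | ∀ z ∈ K, 0 ≤ ⟪y, z⟫} with hD
    have hcover : S ⊆ ⋃ y : D, {x | 0 < ⟪(y : EuclideanSpace ℝ (Fin n)), x⟫} := by
      rintro x ⟨hxK, hxS⟩
      have hx0 : x ≠ 0 := by
        intro h
        rw [h] at hxS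
        simp at hxS
      obtain ⟨y, hy1, hy2⟩ := sep x hxK hx0
      exact Set.mem_iUnion.2 ⟨⟨y, hy1⟩, hy2⟩
    obtain ⟨t, ht⟩ := hScomp.elim_finite_subcover
      (fun y : D => {x | 0 < ⟪(y : EuclideanSpace ℝ (Fin n)), x⟫})
      (fun y => isOpen_lt continuous_const ((continuous_const).inner continuous_id)) hcover
    set e : EuclideanSpace ℝ (Fin n) := ∑ y ∈ t, (y : EuclideanSpace ℝ (Fin n)) with he
    have hepos : ∀ x ∈ S, 0 < ⟪e, x⟫ := by
      intro x hxS
      have hx' := ht hxS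
      rw [Set.mem_iUnion₂] at hx'
      obtain ⟨y, hyt, hyx⟩ := hx'
      rw [he, sum_inner]
      exact Finset.sum_pos' (fun z _ => z.2 x hxS.1) ⟨y, hyt, hyx⟩
    -- minimum of ⟪e, ·⟫ on the compact S
    obtain ⟨x₁, hx₁S, hx₁min⟩ := hScomp.exists_isMinOn (f := fun y : EuclideanSpace ℝ (Fin n) => ⟪e, y⟫)
      ⟨x₀, hx₀K, hx₀S⟩ ((continuous_const.inner continuous_id').continuousOn)
    refine ⟨e, ⟪e, x₁⟫, hepos x₁ hx₁S, ?_⟩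
    intro x hx
    rcases eq_or_ne x 0 with rfl | hx0
    · simp
    · have hnx : (0:ℝ) < ‖x‖ := norm_pos_iff.2 hx0
      have huS : ‖x‖⁻¹ • x ∈ S := by
        refine ⟨hcone _ (inv_nonneg.2 hnx.le) x hx, ?_⟩
        simp [norm_smul, abs_of_nonneg (inv_nonneg.2 hnx.le), inv_mul_cancel₀ hnx.ne']
      have hle : ⟪e, x₁⟫ ≤ ⟪e, ‖x‖⁻¹ • x⟫ := isMinOn_iff.1 hx₁min _ huS
      rw [real_inner_smul_right] at hle
      have := mul_le_mul_of_nonneg_right hle hnx.le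
      rwa [inv_mul_eq_div, div_mul_cancel₀ _ hnx.ne'] at this
  · refine ⟨0, 1, one_pos, ?_⟩
    intro x hx
    rcases eq_or_ne x 0 with rfl | hx0
    · simp
    · exfalso
      have hnx : (0:ℝ) < ‖x‖ := norm_pos_iff.2 hx0
      exact hne ⟨‖x‖⁻¹ • x, hcone _ (inv_nonneg.2 hnx.le) x hx, by
        simp [norm_smul, abs_of_nonneg (inv_nonneg.2 hnx.le), inv_mul_cancel₀ hnx.ne']⟩

/-- Krein–Milman for pointed cones: a functional nonpositive on the extremal section
is nonpositive on all of `K`. -/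
lemma dual_of_extremal (K : Set (EuclideanSpace ℝ (Fin n)))
    (hclosed : IsClosed K) (hconv : Convex ℝ K)
    (hcone : ∀ t : ℝ, 0 ≤ t → ∀ x ∈ K, t • x ∈ K)
    (hpointed : K ∩ (-K) ⊆ {0})
    (w : EuclideanSpace ℝ (Fin n)) (hw : ∀ u ∈ extremalSection K, ⟪w, u⟫ ≤ 0) :
    ∀ z ∈ K, ⟪w, z⟫ ≤ 0 := by
  obtain ⟨e, c, hc, he⟩ := exists_pos_dual K hclosed hconv hcone hpointed
  have hzero : ∀ z ∈ K, ⟪e, z⟫ ≤ 0 → z = 0 := by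
    intro z hz hez
    have h1 : c * ‖z‖ ≤ 0 := le_trans (he z hz) hez
    have h2 : ‖z‖ ≤ 0 := nonpos_of_mul_nonpos_right ?_ hc
    · exact norm_le_zero_iff.1 h2
    · nlinarith [norm_nonneg z]
  set B : Set (EuclideanSpace ℝ (Fin n)) := K ∩ {x | ⟪e, x⟫ = 1} with hB
  have hBclosed : IsClosed B :=
    hclosed.inter (isClosed_eq (continuous_const.inner continuous_id) continuous_const)
  have hBsub : B ⊆ Metric.closedBall 0 (1/c) := by
    rintro x ⟨hxK, hx1⟩
    rw [Metric.mem_closedBall, dist_zero_right]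
    have := he x hxK
    rw [hx1] at this
    rw [le_div_iff₀ hc]
    linarith
  have hBcomp : IsCompact B :=
    (isCompact_closedBall 0 (1/c)).of_isClosed_subset hBclosed hBsub
  have hBconv : Convex ℝ B := by
    rintro x ⟨hxK, hx1⟩ y ⟨hyK, hy1⟩ a b ha hb hab
    refine ⟨hconv hxK hyK ha hb hab, ?_⟩
    simp only [Set.mem_setOf_eq] at hx1 hy1 ⊢
    rw [inner_add_right, real_inner_smul_right, real_inner_smul_right, hx1, hy1]
    linarith
  -- extreme points of B give extreme rays of K
  have hext : ∀ x ∈ B.extremePoints ℝ, ⟪w, x⟫ ≤ 0 := by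
    rintro x hx
    obtain ⟨⟨hxK, hxe⟩, hxext⟩ := hx
    simp only [Set.mem_setOf_eq] at hxe
    have hx0 : x ≠ 0 := by
      intro h; rw [h] at hxe; simp at hxe
    have hnx : (0:ℝ) < ‖x‖ := norm_pos_iff.2 hx0
    set u : EuclideanSpace ℝ (Fin n) := ‖x‖⁻¹ • x with hu
    have hu1 : ‖u‖ = 1 := by
      simp [hu, norm_smul, abs_of_nonneg (inv_nonneg.2 hnx.le), inv_mul_cancel₀ hnx.ne']
    have hxu : x = ‖x‖ • u := by
      rw [hu, smul_smul, mul_inv_cancel₀ hnx.ne', one_smul]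
    have heu : ⟪e, u⟫ = ‖x‖⁻¹ := by
      rw [hu, real_inner_smul_right, hxe, mul_one]
    have hray : IsExtreme ℝ K {p | ∃ t : ℝ, 0 ≤ t ∧ p = t • u} := by
      constructor
      · rintro p ⟨t, ht, rfl⟩
        rw [hu, smul_smul]
        exact hcone _ (mul_nonneg ht (inv_nonneg.2 hnx.le)) x hxK
      · rintro a ha b hb p ⟨t, ht, rfl⟩ ⟨θa, θb, hθa, hθb, hsum, heq⟩
        suffices hab : a ∈ {p | ∃ t : ℝ, 0 ≤ t ∧ p = t • u} ∧
            b ∈ {p | ∃ t : ℝ, 0 ≤ t ∧ p = t • u} from hab.1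
        have hα : 0 ≤ ⟪e, a⟫ := le_trans (mul_nonneg hc.le (norm_nonneg a)) (he a ha)
        have hβ : 0 ≤ ⟪e, b⟫ := le_trans (mul_nonneg hc.le (norm_nonneg b)) (he b hb)
        have hkey : θa * ⟪e, a⟫ + θb * ⟪e, b⟫ = t * ‖x‖⁻¹ := by
          have h := congrArg (fun z => ⟪e, z⟫) heq
          simp only [inner_add_right, real_inner_smul_right, heu] at h
          exact h
        rcases hα.eq_or_lt with hα0 | hα0
        · -- a = 0
          have haz : a = 0 := hzero a ha (le_of_eq hα0.symm)
          rcases hβ.eq_or_lt with hβ0 | hβ0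
          · have hbz : b = 0 := hzero b hb (le_of_eq hβ0.symm)
            exact ⟨⟨0, le_rfl, by rw [haz, zero_smul]⟩, ⟨0, le_rfl, by rw [hbz, zero_smul]⟩⟩
          · refine ⟨⟨0, le_rfl, by rw [haz, zero_smul]⟩, ⟨θb⁻¹ * t, ?_, ?_⟩⟩
            · exact mul_nonneg (inv_nonneg.2 hθb.le) ht
            · have : θb • b = t • u := by rw [haz, smul_zero, zero_add] at heq; exact heq
              calc b = θb⁻¹ • (θb • b) := by
                      rw [smul_smul, inv_mul_cancel₀ hθb.ne', one_smul]
                _ = θb⁻¹ • (t • u) := by rw [this]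
                _ = (θb⁻¹ * t) • u := by rw [smul_smul]
        · rcases hβ.eq_or_lt with hβ0 | hβ0
          · have hbz : b = 0 := hzero b hb (le_of_eq hβ0.symm)
            refine ⟨⟨θa⁻¹ * t, mul_nonneg (inv_nonneg.2 hθa.le) ht, ?_⟩,
              ⟨0, le_rfl, by rw [hbz, zero_smul]⟩⟩
            have : θa • a = t • u := by rw [hbz, smul_zero, add_zero] at heq; exact heq
            calc a = θa⁻¹ • (θa • a) := by
                    rw [smul_smul, inv_mul_cancel₀ hθa.ne', one_smul]
              _ = θa⁻¹ • (t • u) := by rw [this]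
              _ = (θa⁻¹ * t) • u := by rw [smul_smul]
          · -- both positive: use extremality of x in B
            have htpos : 0 < t := by
              by_contra h
              push_neg at h
              have ht0 : t = 0 := le_antisymm h ht
              rw [ht0, zero_mul] at hkey
              nlinarith
            set α := ⟪e, a⟫
            set β := ⟪e, b⟫
            have ha' : α⁻¹ • a ∈ B := by
              refine ⟨hcone _ (inv_nonneg.2 hα0.le) a ha, ?_⟩
              simp only [Set.mem_setOf_eq]
              rw [real_inner_smul_right, inv_mul_cancel₀ hα0.ne']
            have hb' : β⁻¹ • b ∈ B := by
              refine ⟨hcone _ (inv_nonneg.2 hβ0.le) b hb, ?_⟩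
              simp only [Set.mem_setOf_eq]
              rw [real_inner_smul_right, inv_mul_cancel₀ hβ0.ne']
            have hseg : x ∈ openSegment ℝ (α⁻¹ • a) (β⁻¹ • b) := by
              refine ⟨‖x‖ * t⁻¹ * (θa * α), ‖x‖ * t⁻¹ * (θb * β), ?_, ?_, ?_, ?_⟩
              · positivity
              · positivity
              · have : ‖x‖ * t⁻¹ * (θa * α) + ‖x‖ * t⁻¹ * (θb * β)
                    = ‖x‖ * t⁻¹ * (θa * α + θb * β) := by ring
                rw [this, hkey]
                field_simp
              · have h1 : (‖x‖ * t⁻¹ * (θa * α)) • (α⁻¹ • a) = (‖x‖ * t⁻¹) • (θa • a) := by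
                  rw [smul_smul, smul_smul]
                  congr 1
                  field_simp
                have h2 : (‖x‖ * t⁻¹ * (θb * β)) • (β⁻¹ • b) = (‖x‖ * t⁻¹) • (θb • b) := by
                  rw [smul_smul, smul_smul]
                  congr 1
                  field_simp
                rw [h1, h2, ← smul_add, heq, smul_smul]
                rw [show ‖x‖ * t⁻¹ * t = ‖x‖ by field_simp]
                exact hxu.symm
            obtain ⟨hax, hbx⟩ := (mem_extremePoints.1 (show x ∈ B.extremePoints ℝ from ⟨⟨hxK, hxe⟩, hxext⟩)).2 _ ha' _ hb' hseg
            constructor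
            · refine ⟨α * ‖x‖, mul_nonneg hα0.le hnx.le, ?_⟩
              calc a = α • (α⁻¹ • a) := by
                      rw [smul_smul, mul_inv_cancel₀ hα0.ne', one_smul]
                _ = α • x := by rw [hax]
                _ = (α * ‖x‖) • u := by conv_lhs => rw [hxu, smul_smul]
            · refine ⟨β * ‖x‖, mul_nonneg hβ0.le hnx.le, ?_⟩
              calc b = β • (β⁻¹ • b) := by
                      rw [smul_smul, mul_inv_cancel₀ hβ0.ne', one_smul]
                _ = β • x := by rw [hbx]
                _ = (β * ‖x‖) • u := by conv_lhs => rw [hxu, smul_smul]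
    have huE : u ∈ extremalSection K := ⟨hu1, hray⟩
    have := hw u huE
    rw [hxu, real_inner_smul_right]
    exact mul_nonpos_of_nonneg_of_nonpos hnx.le this
  -- conclude via Krein–Milman
  set N : Set (EuclideanSpace ℝ (Fin n)) := {y | ⟪w, y⟫ ≤ 0} with hN
  have hNconv : Convex ℝ N := by
    rintro x hx y hy a b ha hb hab
    simp only [hN, Set.mem_setOf_eq] at hx hy ⊢
    rw [inner_add_right, real_inner_smul_right, real_inner_smul_right]
    nlinarith
  have hNclosed : IsClosed N :=
    isClosed_le (continuous_const.inner continuous_id) continuous_const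
  have hBN : B ⊆ N := by
    rw [← closure_convexHull_extremePoints hBcomp hBconv]
    exact closure_minimal (convexHull_min hext hNconv) hNclosed
  intro z hz
  rcases eq_or_ne z 0 with rfl | hz0
  · simp
  · have hnz : (0:ℝ) < ‖z‖ := norm_pos_iff.2 hz0
    have hs : 0 < ⟪e, z⟫ := lt_of_lt_of_le (by positivity) (he z hz)
    have hmem : ⟪e, z⟫⁻¹ • z ∈ B := by
      refine ⟨hcone _ (inv_nonneg.2 hs.le) z hz, ?_⟩
      simp only [Set.mem_setOf_eq]
      rw [real_inner_smul_right, inv_mul_cancel₀ hs.ne']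
    have := hBN hmem
    simp only [hN, Set.mem_setOf_eq, real_inner_smul_right] at this
    nlinarith [inv_pos.2 hs]

end Aux

theorem stmt9 {n : ℕ} (K : Set (EuclideanSpace ℝ (Fin n)))
    (hclosed : IsClosed K) (hconv : Convex ℝ K)
    (hcone : ∀ t : ℝ, 0 ≤ t → ∀ x ∈ K, t • x ∈ K)
    (hpointed : K ∩ (-K) ⊆ {0}) (hnontriv : K ≠ {0})
    (h0 : (0 : EuclideanSpace ℝ (Fin n)) ∉
      closure (affineSpan ℝ (extremalSection K) : Set (EuclideanSpace ℝ (Fin n))))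
    (d : EuclideanSpace ℝ (Fin n)) (hd : IsCircumcentricDir K d) :
    d ≠ 0 ∧ (∀ u ∈ extremalSection K, ⟪d, u⟫ = -‖d‖ ^ 2) ∧
    ∀ v : EuclideanSpace ℝ (Fin n), ‖v‖ ≤ ‖d‖ ^ 2 → ∀ z ∈ K, ⟪d + v, z⟫ ≤ 0 := by
  obtain ⟨hd1, hd2⟩ := hd
  have hdne : d ≠ 0 := by
    intro h
    rw [h, neg_zero] at hd1
    exact h0 hd1
  have hmem : ∀ u ∈ extremalSection K,
      u ∈ closure (affineSpan ℝ (extremalSection K) : Set (EuclideanSpace ℝ (Fin n))) :=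
    fun u hu => subset_closure (subset_affineSpan ℝ _ hu)
  have hpart2 : ∀ u ∈ extremalSection K, ⟪d, u⟫ = -‖d‖ ^ 2 := by
    intro u hu
    have h := hd2 u (hmem u hu)
    rw [inner_add_left, real_inner_self_eq_norm_sq] at h
    rw [real_inner_comm]
    linarith
  refine ⟨hdne, hpart2, ?_⟩
  intro v hv z hz
  refine dual_of_extremal K hclosed hconv hcone hpointed (d + v) ?_ z hz
  intro u hu
  have h1 : ⟪d, u⟫ = -‖d‖ ^ 2 := hpart2 u hu
  have h2 : ⟪v, u⟫ ≤ ‖v‖ := by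
    calc ⟪v, u⟫ ≤ ‖v‖ * ‖u‖ := real_inner_le_norm v u
      _ = ‖v‖ := by rw [hu.1, mul_one]
  rw [inner_add_left, h1]
  linarith
end

section
/- In the setting of the sharp non-polyhedral theorem (K pointed closed convex cone, 0 ∉ closure(aff(E_K)), d = -proj_{closure(aff(E_K))}(0), P_K = {v : d+v ∈ K°}), the boundary contact set ∂B̄(0,‖d‖²) ∩ ∂P_K equals ‖d‖² · closure(E_K), the homothetic image of closure(E_K) at scale ‖d‖². -/
open scoped RealInnerProductSpace Pointwise

theorem stmt11 {n : ℕ} (K : Set (EuclideanSpace ℝ (Fin n)))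
    (hclosed : IsClosed K) (hconv : Convex ℝ K)
    (hcone : ∀ t : ℝ, 0 ≤ t → ∀ x ∈ K, t • x ∈ K)
    (hpointed : K ∩ (-K) ⊆ {0}) (hnontriv : K ≠ {0})
    (h0 : (0 : EuclideanSpace ℝ (Fin n)) ∉
      closure (affineSpan ℝ (extremalSection K) : Set (EuclideanSpace ℝ (Fin n))))
    (hKE : K = closure {x | ∃ t : ℝ, 0 ≤ t ∧ ∃ u ∈ extremalSection K, x = t • u})
    (d : EuclideanSpace ℝ (Fin n)) (hd : IsCircumcentricDir K d) :
    frontier (Metric.closedBall (0 : EuclideanSpace ℝ (Fin n)) (‖d‖ ^ 2)) ∩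
      frontier {v : EuclideanSpace ℝ (Fin n) | ∀ z ∈ K, ⟪d + v, z⟫ ≤ 0} =
      (‖d‖ ^ 2) • closure (extremalSection K) := by
  classical
  set S : Set (EuclideanSpace ℝ (Fin n)) := extremalSection K with hS
  set r : ℝ := ‖d‖ ^ 2 with hrdef
  set P : Set (EuclideanSpace ℝ (Fin n)) := {v | ∀ z ∈ K, ⟪d + v, z⟫ ≤ 0} with hPdef
  -- d ≠ 0
  have hd0 : d ≠ 0 := by
    rintro rfl
    exact h0 (by simpa using hd.1)
  have hrpos : 0 < r := by
    have := norm_pos_iff.mpr hd0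
    positivity
  -- members of S lie in K and have norm 1, and ⟪d, u⟫ = -r
  have hSsubK : S ⊆ K := by
    intro u hu
    have : u ∈ {x | ∃ t : ℝ, 0 ≤ t ∧ x = t • u} := ⟨1, zero_le_one, (one_smul ℝ u).symm⟩
    exact hu.2.1 this
  have hnorm1 : ∀ u ∈ closure S, ‖u‖ = 1 := by
    intro u hu
    have hsub : S ⊆ Metric.sphere (0 : EuclideanSpace ℝ (Fin n)) 1 := by
      intro x hx
      simpa [Metric.mem_sphere, dist_zero_right] using hx.1
    have := closure_minimal hsub Metric.isClosed_sphere hu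
    simpa [Metric.mem_sphere, dist_zero_right] using this
  have hdin : ∀ u ∈ closure S, ⟪d, u⟫ = -r := by
    intro u hu
    have hu' : u ∈ closure (affineSpan ℝ S : Set (EuclideanSpace ℝ (Fin n))) :=
      closure_mono (subset_affineSpan ℝ S) hu
    have h := hd.2 u hu'
    rw [inner_add_left, real_inner_self_eq_norm_sq] at h
    have : ⟪u, d⟫ = -r := by linarith
    rw [real_inner_comm] at this
    exact this
  -- P is closed
  have hPc : IsClosed P := by
    have : P = ⋂ z ∈ K, {v : EuclideanSpace ℝ (Fin n) | ⟪d + v, z⟫ ≤ 0} := by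
      ext v; simp [hPdef, Set.mem_iInter]
    rw [this]
    refine isClosed_biInter fun z _ => isClosed_le ?_ continuous_const
    exact (continuous_const.add continuous_id).inner continuous_const
  -- membership criterion for P via S
  have hmemP : ∀ w : EuclideanSpace ℝ (Fin n), (∀ u ∈ S, ⟪d + w, u⟫ ≤ 0) → w ∈ P := by
    intro w hw z hz
    rw [hKE] at hz
    have hH : IsClosed {z : EuclideanSpace ℝ (Fin n) | ⟪d + w, z⟫ ≤ 0} :=
      isClosed_le (continuous_const.inner continuous_id) continuous_const
    have hsub : {x : EuclideanSpace ℝ (Fin n) | ∃ t : ℝ, 0 ≤ t ∧ ∃ u ∈ extremalSection K, x = t • u}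
        ⊆ {z | ⟪d + w, z⟫ ≤ 0} := by
      rintro x ⟨t, ht, u, hu, rfl⟩
      show ⟪d + w, t • u⟫ ≤ 0
      rw [real_inner_smul_right]
      exact mul_nonpos_of_nonneg_of_nonpos ht (hw u hu)
    exact closure_minimal hsub hH hz
  have hfr : frontier (Metric.closedBall (0 : EuclideanSpace ℝ (Fin n)) r) =
      Metric.sphere 0 r := frontier_closedBall 0 hrpos.ne'
  rw [hfr]
  apply Set.Subset.antisymm
  · -- hard direction: sphere ∩ frontier P ⊆ r • closure S
    rintro v ⟨hv1, hv2⟩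
    have hvnorm : ‖v‖ = r := by simpa [dist_zero_right] using hv1
    -- closure S is nonempty and compact
    have hSne : (closure S).Nonempty := by
      have h1 : (closure (affineSpan ℝ S : Set (EuclideanSpace ℝ (Fin n)))).Nonempty :=
        ⟨-d, hd.1⟩
    -- hence affineSpan nonempty, hence S nonempty
      have h2 : (affineSpan ℝ S : Set (EuclideanSpace ℝ (Fin n))).Nonempty :=
        closure_nonempty_iff.mp h1
      have h3 : S.Nonempty := by
        by_contra hemp
        rw [Set.not_nonempty_iff_eq_empty] at hemp
        rw [hemp] at h2
        simp at h2
      exact h3.closure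
    have hcomp : IsCompact (closure S) := by
      have hb : Bornology.IsBounded (closure S) := by
        refine (Metric.isBounded_closedBall (x := (0 : EuclideanSpace ℝ (Fin n))) (r := 1)).subset ?_
        intro x hx
        simp [Metric.mem_closedBall, dist_zero_right, (hnorm1 x hx).le]
      exact Metric.isCompact_of_isClosed_isBounded isClosed_closure hb
    obtain ⟨u₀, hu₀, hmax⟩ := hcomp.exists_isMaxOn hSne
      ((continuous_const.inner continuous_id).continuousOn
        (f := fun u : EuclideanSpace ℝ (Fin n) => ⟪v, u⟫))
    have hle : ⟪v, u₀⟫ ≤ r := by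
      calc ⟪v, u₀⟫ ≤ ‖v‖ * ‖u₀‖ := real_inner_le_norm v u₀
      _ = r := by rw [hvnorm, hnorm1 u₀ hu₀, mul_one]
    rcases eq_or_lt_of_le hle with heq | hlt
    · -- equality case of Cauchy–Schwarz
      have : ⟪v, u₀⟫ = ‖v‖ * ‖u₀‖ := by rw [hvnorm, hnorm1 u₀ hu₀, mul_one]; exact heq
      have hvr : ‖u₀‖ • v = ‖v‖ • u₀ := inner_eq_norm_mul_iff_real.mp this
      rw [hnorm1 u₀ hu₀, hvnorm, one_smul] at hvr
      exact ⟨u₀, hu₀, hvr.symm⟩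
    · -- otherwise v is an interior point of P, contradiction with v ∈ frontier P
      exfalso
      have hint : v ∈ interior P := by
        rw [mem_interior]
        refine ⟨Metric.ball v (r - ⟪v, u₀⟫), ?_, Metric.isOpen_ball,
          Metric.mem_ball_self (by linarith)⟩
        intro w hw
        refine hmemP w fun u hu => ?_
        have h1 : ⟪d, u⟫ = -r := hdin u (subset_closure hu)
        have h2 : ⟪v, u⟫ ≤ ⟪v, u₀⟫ := hmax (subset_closure hu)
        have h3 : ⟪w - v, u⟫ ≤ ‖w - v‖ * ‖u‖ := real_inner_le_norm _ _
        have h4 : ‖w - v‖ < r - ⟪v, u₀⟫ := by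
          simpa [dist_eq_norm] using hw
        have h5 : ⟪w, u⟫ = ⟪v, u⟫ + ⟪w - v, u⟫ := by
          rw [← inner_add_left, add_sub_cancel]
        rw [inner_add_left, h1, h5]
        have hun : ‖u‖ = 1 := hnorm1 u (subset_closure hu)
        rw [hun, mul_one] at h3
        linarith
      exact hv2.2 hint
  · -- easy direction: r • closure S ⊆ sphere ∩ frontier P
    have hclosedLHS : IsClosed (Metric.sphere (0 : EuclideanSpace ℝ (Fin n)) r ∩ frontier P) :=
      Metric.isClosed_sphere.inter isClosed_frontier
    have hstep : r • S ⊆ Metric.sphere (0 : EuclideanSpace ℝ (Fin n)) r ∩ frontier P := by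
      rintro _ ⟨u, hu, rfl⟩
      have hun : ‖u‖ = 1 := hu.1
      constructor
      · simp [Metric.mem_sphere, dist_zero_right, norm_smul, hun, abs_of_pos hrpos]
      · rw [hPc.frontier_eq]
        constructor
        · refine hmemP _ fun u' hu' => ?_
          have h1 : ⟪d, u'⟫ = -r := hdin u' (subset_closure hu')
          have h2 : ⟪u, u'⟫ ≤ 1 := by
            have := real_inner_le_norm u u'
            rw [hun, hu'.1, one_mul] at this
            exact this
          rw [inner_add_left, h1, real_inner_smul_left]
          nlinarith
        · -- not in interior: constraint at z = u is tight
          intro hint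
          rw [mem_interior_iff_mem_nhds, Metric.mem_nhds_iff] at hint
          obtain ⟨ε, hε, hball⟩ := hint
          have hw : r • u + (ε / 2) • u ∈ P := by
            apply hball
            rw [Metric.mem_ball, dist_eq_norm]
            have : r • u + (ε / 2) • u - r • u = (ε / 2) • u := by abel
            rw [this, norm_smul, hun, mul_one, Real.norm_eq_abs, abs_of_pos (by linarith)]
            linarith
          have hcon := hw u (hSsubK hu)
          rw [inner_add_left, inner_add_left, real_inner_smul_left, real_inner_smul_left,
            real_inner_self_eq_norm_sq, hun, hdin u (subset_closure hu)] at hcon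
          norm_num at hcon
          linarith
    calc r • closure S = (fun x : EuclideanSpace ℝ (Fin n) => r • x) '' closure S := rfl
      _ ⊆ closure ((fun x : EuclideanSpace ℝ (Fin n) => r • x) '' S) :=
          image_closure_subset_closure_image (continuous_const_smul r)
      _ = closure (r • S) := rfl
      _ ⊆ Metric.sphere (0 : EuclideanSpace ℝ (Fin n)) r ∩ frontier P :=
          closure_minimal hstep hclosedLHS
end

section
/- Let K₁ ⊂ R^{n₁} and K₂ ⊂ R^{n₂} be pointed closed convex cones with circumcentric directions d₁, d₂ (negatives of projections of the origin onto the closed affine hulls of their unit extreme-ray sets), both nonzero, with δ₁ = ‖d₁‖², δ₂ = ‖d₂‖². Then the circumcentric direction of K₁ × K₂ is d = (δ₂/(δ₁+δ₂) · d₁, δ₁/(δ₁+δ₂) · d₂) and satisfies 1/‖d‖² = 1/δ₁ + 1/δ₂. -/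
open scoped RealInnerProductSpace

section Aux
variable {E : Type*} [NormedAddCommGroup E] [InnerProductSpace ℝ E]

lemma circ_unique {K : Set E} {d d' : E} (h : IsCircumcentricDir K d)
    (h' : IsCircumcentricDir K d') : d = d' := by
  have h1 := h.2 (-d') h'.1
  have h2 := h'.2 (-d) h.1
  rw [neg_add_eq_sub] at h1 h2
  have h2' : ⟪d - d', d'⟫ = 0 := by
    rw [← neg_sub d' d, inner_neg_left, h2, neg_zero]
  have : ⟪d - d', d - d'⟫ = 0 := by
    rw [inner_sub_right, h1, h2', sub_zero]
  rw [inner_self_eq_zero, sub_eq_zero] at this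
  exact this

lemma nonempty_of_mem_closure_affineSpan {s : Set E} {x : E}
    (hx : x ∈ closure (affineSpan ℝ s : Set E)) : s.Nonempty := by
  by_contra h
  rw [Set.not_nonempty_iff_eq_empty] at h
  subst h
  rw [AffineSubspace.span_empty] at hx
  simp at hx

lemma inner_eq_on_closure_affineSpan {s : Set E} {v : E} {c : ℝ}
    (h : ∀ x ∈ s, ⟪x, v⟫ = c) :
    ∀ x ∈ closure (affineSpan ℝ s : Set E), ⟪x, v⟫ = c := by
  have hspan : ∀ x ∈ (affineSpan ℝ s : Set E), ⟪x, v⟫ = c := by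
    intro x hx
    have hx' : x ∈ affineSpan ℝ s := hx
    refine affineSpan_induction (p := fun y => ⟪y, v⟫ = c) hx' h ?_
    intro t u w z hu hw hz
    simp only [vsub_eq_sub, vadd_eq_add, inner_add_left, real_inner_smul_left,
      inner_sub_left, hu, hw, hz]
    ring
  intro x hx
  have hc : IsClosed {y : E | ⟪y, v⟫ = c} :=
    isClosed_eq (Continuous.inner continuous_id continuous_const) continuous_const
  exact closure_minimal hspan hc hx

lemma add_sub_mem_closure_affineSpan {s : Set E} {p q r : E}
    (hp : p ∈ closure (affineSpan ℝ s : Set E))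
    (hq : q ∈ closure (affineSpan ℝ s : Set E))
    (hr : r ∈ closure (affineSpan ℝ s : Set E)) :
    p + q - r ∈ closure (affineSpan ℝ s : Set E) := by
  rcases mem_closure_iff_seq_limit.mp hp with ⟨a, ha, hal⟩
  rcases mem_closure_iff_seq_limit.mp hq with ⟨b, hb, hbl⟩
  rcases mem_closure_iff_seq_limit.mp hr with ⟨e, he, hel⟩
  refine mem_closure_of_tendsto ((hal.add hbl).sub hel) ?_
  filter_upwards with n
  have : (1:ℝ) • (a n -ᵥ e n) +ᵥ b n ∈ affineSpan ℝ s :=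
    AffineSubspace.smul_vsub_vadd_mem _ 1 (ha n) (he n) (hb n)
  simpa only [one_smul, vsub_eq_sub, vadd_eq_add, sub_add_eq_add_sub, SetLike.mem_coe] using this

end Aux

section ProdCone
variable {E F : Type*} [NormedAddCommGroup E] [InnerProductSpace ℝ E]
  [NormedAddCommGroup F] [InnerProductSpace ℝ F]
variable {K₁ : Set E} {K₂ : Set F}

lemma left_mem_extremalSection_prod
    (hcone₂ : ∀ t : ℝ, 0 ≤ t → ∀ x ∈ K₂, t • x ∈ K₂)
    (hpointed₂ : K₂ ∩ (-K₂) ⊆ {0}) (h0₂ : (0:F) ∈ K₂)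
    {u : E} (hu : u ∈ extremalSection K₁) :
    (WithLp.equiv 2 (E × F)).symm (u, 0) ∈
      extremalSection {q : WithLp 2 (E × F) | q.fst ∈ K₁ ∧ q.snd ∈ K₂} := by
  set X := (WithLp.equiv 2 (E × F)).symm (u, 0) with hX
  refine ⟨?_, ?_, ?_⟩
  · rw [WithLp.prod_norm_eq_of_L2]
    show Real.sqrt (‖u‖ ^ 2 + ‖(0:F)‖ ^ 2) = 1
    rw [hu.1]; simp
  · rintro x ⟨t, ht, rfl⟩
    refine ⟨hu.2.1 ⟨t, ht, rfl⟩, ?_⟩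
    show t • (0:F) ∈ K₂
    rw [smul_zero]; exact h0₂
  · rintro x hx y hy z ⟨t, ht, rfl⟩ ⟨a, b, ha, hb, hab, heq⟩
    have heq1 : a • x.fst + b • y.fst = t • u := congrArg WithLp.fst heq
    have heq2 : a • x.snd + b • y.snd = 0 := by
      have h := congrArg WithLp.snd heq
      exact h.trans (smul_zero t)
    have h4 : a • x.snd = -(b • y.snd) := by
      rw [← eq_neg_iff_add_eq_zero] at heq2; exact heq2
    have hxs0 : x.snd = 0 := by
      have hx2 : x.snd = -((a⁻¹ * b) • y.snd) := by
        calc x.snd = a⁻¹ • (a • x.snd) := by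
              rw [smul_smul, inv_mul_cancel₀ ha.ne', one_smul]
          _ = a⁻¹ • (-(b • y.snd)) := by rw [h4]
          _ = -((a⁻¹ * b) • y.snd) := by rw [smul_neg, smul_smul]
      have hmem : x.snd ∈ K₂ ∩ (-K₂) := by
        refine ⟨hx.2, Set.mem_neg.mpr ?_⟩
        rw [hx2, neg_neg]
        exact hcone₂ _ (by positivity) _ hy.2
      exact hpointed₂ hmem
    have hys0 : y.snd = 0 := by
      have : b • y.snd = 0 := by
        rw [hxs0, smul_zero, zero_add] at heq2; exact heq2
      rcases smul_eq_zero.mp this with h | h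
      · exact absurd h hb.ne'
      · exact h
    have hseg : t • u ∈ openSegment ℝ x.fst y.fst := ⟨a, b, ha, hb, hab, heq1⟩
    obtain ⟨s, hs, hxf⟩ := hu.2.2 hx.1 hy.1 ⟨t, ht, rfl⟩ hseg
    exact ⟨s, hs, (WithLp.ext_iff 2).mpr (Prod.ext hxf (by show x.snd = s • (0:F); rw [hxs0]; exact (smul_zero s).symm))⟩

lemma right_mem_extremalSection_prod
    (hcone₁ : ∀ t : ℝ, 0 ≤ t → ∀ x ∈ K₁, t • x ∈ K₁)
    (hpointed₁ : K₁ ∩ (-K₁) ⊆ {0}) (h0₁ : (0:E) ∈ K₁)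
    {v : F} (hv : v ∈ extremalSection K₂) :
    (WithLp.equiv 2 (E × F)).symm (0, v) ∈
      extremalSection {q : WithLp 2 (E × F) | q.fst ∈ K₁ ∧ q.snd ∈ K₂} := by
  set X := (WithLp.equiv 2 (E × F)).symm (0, v) with hX
  refine ⟨?_, ?_, ?_⟩
  · rw [WithLp.prod_norm_eq_of_L2]
    show Real.sqrt (‖(0:E)‖ ^ 2 + ‖v‖ ^ 2) = 1
    rw [hv.1]; simp
  · rintro x ⟨t, ht, rfl⟩
    refine ⟨?_, hv.2.1 ⟨t, ht, rfl⟩⟩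
    show t • (0:E) ∈ K₁
    rw [smul_zero]; exact h0₁
  · rintro x hx y hy z ⟨t, ht, rfl⟩ ⟨a, b, ha, hb, hab, heq⟩
    have heq1 : a • x.snd + b • y.snd = t • v := congrArg WithLp.snd heq
    have heq2 : a • x.fst + b • y.fst = 0 := by
      have h := congrArg WithLp.fst heq
      exact h.trans (smul_zero t)
    have h4 : a • x.fst = -(b • y.fst) := by
      rw [← eq_neg_iff_add_eq_zero] at heq2; exact heq2
    have hxs0 : x.fst = 0 := by
      have hx2 : x.fst = -((a⁻¹ * b) • y.fst) := by
        calc x.fst = a⁻¹ • (a • x.fst) := by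
              rw [smul_smul, inv_mul_cancel₀ ha.ne', one_smul]
          _ = a⁻¹ • (-(b • y.fst)) := by rw [h4]
          _ = -((a⁻¹ * b) • y.fst) := by rw [smul_neg, smul_smul]
      have hmem : x.fst ∈ K₁ ∩ (-K₁) := by
        refine ⟨hx.1, Set.mem_neg.mpr ?_⟩
        rw [hx2, neg_neg]
        exact hcone₁ _ (by positivity) _ hy.1
      exact hpointed₁ hmem
    have hys0 : y.fst = 0 := by
      have : b • y.fst = 0 := by
        rw [hxs0, smul_zero, zero_add] at heq2; exact heq2
      rcases smul_eq_zero.mp this with h | h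
      · exact absurd h hb.ne'
      · exact h
    have hseg : t • v ∈ openSegment ℝ x.snd y.snd := ⟨a, b, ha, hb, hab, heq1⟩
    obtain ⟨s, hs, hxf⟩ := hv.2.2 hx.2 hy.2 ⟨t, ht, rfl⟩ hseg
    exact ⟨s, hs, (WithLp.ext_iff 2).mpr (Prod.ext (by show x.fst = s • (0:E); rw [hxs0]; exact (smul_zero s).symm) hxf)⟩

lemma extremalSection_prod_subset
    (hcone₁ : ∀ t : ℝ, 0 ≤ t → ∀ x ∈ K₁, t • x ∈ K₁) (h0₁ : (0:E) ∈ K₁)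
    (hcone₂ : ∀ t : ℝ, 0 ≤ t → ∀ x ∈ K₂, t • x ∈ K₂) (h0₂ : (0:F) ∈ K₂)
    {w : WithLp 2 (E × F)}
    (hw : w ∈ extremalSection {q : WithLp 2 (E × F) | q.fst ∈ K₁ ∧ q.snd ∈ K₂}) :
    (w.fst ∈ extremalSection K₁ ∧ w.snd = 0) ∨
      (w.fst = 0 ∧ w.snd ∈ extremalSection K₂) := by
  have hwmem : w ∈ {q : WithLp 2 (E × F) | q.fst ∈ K₁ ∧ q.snd ∈ K₂} :=
    hw.2.1 ⟨1, zero_le_one, (one_smul ℝ w).symm⟩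
  have hzero : w.fst = 0 ∨ w.snd = 0 := by
    by_contra h
    push_neg at h
    set x := (WithLp.equiv 2 (E × F)).symm ((2:ℝ) • w.fst, 0) with hx
    set y := (WithLp.equiv 2 (E × F)).symm (0, (2:ℝ) • w.snd) with hy
    have hxK : x ∈ {q : WithLp 2 (E × F) | q.fst ∈ K₁ ∧ q.snd ∈ K₂} :=
      ⟨hcone₁ 2 (by norm_num) _ hwmem.1, h0₂⟩
    have hyK : y ∈ {q : WithLp 2 (E × F) | q.fst ∈ K₁ ∧ q.snd ∈ K₂} :=
      ⟨h0₁, hcone₂ 2 (by norm_num) _ hwmem.2⟩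
    have hseg : w ∈ openSegment ℝ x y := by
      refine ⟨1/2, 1/2, by norm_num, by norm_num, by norm_num, ?_⟩
      refine (WithLp.ext_iff 2).mpr (Prod.ext ?_ ?_)
      · show (1/2 : ℝ) • ((2:ℝ) • w.fst) + (1/2 : ℝ) • (0:E) = w.fst
        rw [smul_smul, smul_zero, add_zero]; norm_num
      · show (1/2 : ℝ) • (0:F) + (1/2 : ℝ) • ((2:ℝ) • w.snd) = w.snd
        rw [smul_smul, smul_zero, zero_add]; norm_num
    obtain ⟨t, ht, hxw⟩ := hw.2.2 hxK hyK ⟨1, zero_le_one, (one_smul ℝ w).symm⟩ hseg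
    have h2 : (0:F) = t • w.snd := congrArg WithLp.snd hxw
    have ht0 : t = 0 := by
      rcases smul_eq_zero.mp h2.symm with h' | h'
      · exact h'
      · exact absurd h' h.2
    have h1 : (2:ℝ) • w.fst = t • w.fst := congrArg WithLp.fst hxw
    rw [ht0, zero_smul] at h1
    rcases smul_eq_zero.mp h1 with h' | h'
    · norm_num at h'
    · exact absurd h' h.1
  have hnorm : ‖w‖ ^ 2 = ‖w.fst‖ ^ 2 + ‖w.snd‖ ^ 2 := WithLp.prod_norm_sq_eq_of_L2 w
  rcases hzero with h0 | h0
  · right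
    refine ⟨h0, ?_, ?_, ?_⟩
    · have : ‖w.snd‖ ^ 2 = 1 := by
        rw [hw.1, h0] at hnorm; simpa using hnorm.symm
      nlinarith [norm_nonneg w.snd]
    · rintro z ⟨t, ht, rfl⟩
      have : t • w ∈ {q : WithLp 2 (E × F) | q.fst ∈ K₁ ∧ q.snd ∈ K₂} :=
        hw.2.1 ⟨t, ht, rfl⟩
      exact this.2
    · rintro x₂ hx₂ y₂ hy₂ z ⟨t, ht, rfl⟩ ⟨a, b, ha, hb, hab, heq⟩
      set X := (WithLp.equiv 2 (E × F)).symm (0, x₂) with hXd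
      set Y := (WithLp.equiv 2 (E × F)).symm (0, y₂) with hYd
      have hXK : X ∈ {q : WithLp 2 (E × F) | q.fst ∈ K₁ ∧ q.snd ∈ K₂} := ⟨h0₁, hx₂⟩
      have hYK : Y ∈ {q : WithLp 2 (E × F) | q.fst ∈ K₁ ∧ q.snd ∈ K₂} := ⟨h0₁, hy₂⟩
      have hseg : t • w ∈ openSegment ℝ X Y := by
        refine ⟨a, b, ha, hb, hab, (WithLp.ext_iff 2).mpr (Prod.ext ?_ ?_)⟩
        · show a • (0:E) + b • (0:E) = t • w.fst
          rw [h0, smul_zero, smul_zero, smul_zero, add_zero]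
        · show a • x₂ + b • y₂ = t • w.snd
          exact heq
      obtain ⟨s, hs, hX⟩ := hw.2.2 hXK hYK ⟨t, ht, rfl⟩ hseg
      exact ⟨s, hs, congrArg WithLp.snd hX⟩
  · left
    refine ⟨⟨?_, ?_, ?_⟩, h0⟩
    · have : ‖w.fst‖ ^ 2 = 1 := by
        rw [hw.1, h0] at hnorm; simpa using hnorm.symm
      nlinarith [norm_nonneg w.fst]
    · rintro z ⟨t, ht, rfl⟩
      have : t • w ∈ {q : WithLp 2 (E × F) | q.fst ∈ K₁ ∧ q.snd ∈ K₂} :=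
        hw.2.1 ⟨t, ht, rfl⟩
      exact this.1
    · rintro x₁ hx₁ y₁ hy₁ z ⟨t, ht, rfl⟩ ⟨a, b, ha, hb, hab, heq⟩
      set X := (WithLp.equiv 2 (E × F)).symm (x₁, 0) with hXd
      set Y := (WithLp.equiv 2 (E × F)).symm (y₁, 0) with hYd
      have hXK : X ∈ {q : WithLp 2 (E × F) | q.fst ∈ K₁ ∧ q.snd ∈ K₂} := ⟨hx₁, h0₂⟩
      have hYK : Y ∈ {q : WithLp 2 (E × F) | q.fst ∈ K₁ ∧ q.snd ∈ K₂} := ⟨hy₁, h0₂⟩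
      have hseg : t • w ∈ openSegment ℝ X Y := by
        refine ⟨a, b, ha, hb, hab, (WithLp.ext_iff 2).mpr (Prod.ext ?_ ?_)⟩
        · show a • x₁ + b • y₁ = t • w.fst
          exact heq
        · show a • (0:F) + b • (0:F) = t • w.snd
          rw [h0, smul_zero, smul_zero, smul_zero, add_zero]
      obtain ⟨s, hs, hX⟩ := hw.2.2 hXK hYK ⟨t, ht, rfl⟩ hseg
      exact ⟨s, hs, congrArg WithLp.fst hX⟩

/-- The embedding `x ↦ (α • x, (1-α) • v₀)` maps the closed affine hull of `extremalSection K₁`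
into the closed affine hull of the extremal section of the product cone. -/
lemma left_map_closure_affineSpan
    (hcone₁ : ∀ t : ℝ, 0 ≤ t → ∀ x ∈ K₁, t • x ∈ K₁)
    (hpointed₁ : K₁ ∩ (-K₁) ⊆ {0}) (h0₁ : (0:E) ∈ K₁)
    (hcone₂ : ∀ t : ℝ, 0 ≤ t → ∀ x ∈ K₂, t • x ∈ K₂)
    (hpointed₂ : K₂ ∩ (-K₂) ⊆ {0}) (h0₂ : (0:F) ∈ K₂)
    {v₀ : F} (hv₀ : v₀ ∈ extremalSection K₂) (α : ℝ)
    {x : E} (hx : x ∈ closure (affineSpan ℝ (extremalSection K₁) : Set E)) :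
    (WithLp.equiv 2 (E × F)).symm (α • x, (1-α) • v₀) ∈
      closure (affineSpan ℝ (extremalSection
        {q : WithLp 2 (E × F) | q.fst ∈ K₁ ∧ q.snd ∈ K₂}) : Set (WithLp 2 (E × F))) := by
  set Ep := extremalSection {q : WithLp 2 (E × F) | q.fst ∈ K₁ ∧ q.snd ∈ K₂} with hEp
  set f : E → WithLp 2 (E × F) :=
    fun z => (WithLp.equiv 2 (E × F)).symm (α • z, (1-α) • v₀) with hf
  have hcont : Continuous f :=
    (WithLp.prod_continuous_toLp 2 E F).comp
      ((continuous_const_smul α).prodMk continuous_const)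
  have hmaps : Set.MapsTo f (affineSpan ℝ (extremalSection K₁) : Set E)
      (affineSpan ℝ Ep : Set (WithLp 2 (E × F))) := by
    intro z hz
    have hz' : z ∈ affineSpan ℝ (extremalSection K₁) := hz
    refine affineSpan_induction (p := fun z => f z ∈ affineSpan ℝ Ep) hz' ?_ ?_
    · intro u hu
      have hP : (WithLp.equiv 2 (E × F)).symm (u, 0) ∈ Ep :=
        left_mem_extremalSection_prod hcone₂ hpointed₂ h0₂ hu
      have hQ : (WithLp.equiv 2 (E × F)).symm (0, v₀) ∈ Ep :=
        right_mem_extremalSection_prod hcone₁ hpointed₁ h0₁ hv₀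
      have key : f u = α • (((WithLp.equiv 2 (E × F)).symm (u, 0) : WithLp 2 (E × F)) -ᵥ
          (WithLp.equiv 2 (E × F)).symm (0, v₀)) +ᵥ (WithLp.equiv 2 (E × F)).symm (0, v₀) := by
        refine (WithLp.ext_iff 2).mpr (Prod.ext ?_ ?_)
        · show α • u = α • (u - 0) + 0
          module
        · show (1-α) • v₀ = α • ((0:F) - v₀) + v₀
          module
      show f u ∈ affineSpan ℝ Ep
      rw [key]
      exact AffineSubspace.smul_vsub_vadd_mem _ α
        (mem_affineSpan ℝ hP) (mem_affineSpan ℝ hQ) (mem_affineSpan ℝ hQ)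
    · intro c u v w pu pv pw
      have key : f (c • (u -ᵥ v) +ᵥ w) = c • (f u -ᵥ f v) +ᵥ f w := by
        refine (WithLp.ext_iff 2).mpr (Prod.ext ?_ ?_)
        · show α • (c • (u - v) + w) = c • (α • u - α • v) + α • w
          module
        · show (1-α) • v₀ = c • ((1-α) • v₀ - (1-α) • v₀) + (1-α) • v₀
          module
      show f (c • (u -ᵥ v) +ᵥ w) ∈ affineSpan ℝ Ep
      rw [key]
      exact AffineSubspace.smul_vsub_vadd_mem _ c pu pv pw
  show f x ∈ closure (affineSpan ℝ Ep : Set (WithLp 2 (E × F)))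
  exact map_mem_closure hcont hx hmaps

/-- The embedding `y ↦ (α • u₀, (1-α) • y)` maps the closed affine hull of `extremalSection K₂`
into the closed affine hull of the extremal section of the product cone. -/
lemma right_map_closure_affineSpan
    (hcone₁ : ∀ t : ℝ, 0 ≤ t → ∀ x ∈ K₁, t • x ∈ K₁)
    (hpointed₁ : K₁ ∩ (-K₁) ⊆ {0}) (h0₁ : (0:E) ∈ K₁)
    (hcone₂ : ∀ t : ℝ, 0 ≤ t → ∀ x ∈ K₂, t • x ∈ K₂)
    (hpointed₂ : K₂ ∩ (-K₂) ⊆ {0}) (h0₂ : (0:F) ∈ K₂)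
    {u₀ : E} (hu₀ : u₀ ∈ extremalSection K₁) (α : ℝ)
    {y : F} (hy : y ∈ closure (affineSpan ℝ (extremalSection K₂) : Set F)) :
    (WithLp.equiv 2 (E × F)).symm (α • u₀, (1-α) • y) ∈
      closure (affineSpan ℝ (extremalSection
        {q : WithLp 2 (E × F) | q.fst ∈ K₁ ∧ q.snd ∈ K₂}) : Set (WithLp 2 (E × F))) := by
  set Ep := extremalSection {q : WithLp 2 (E × F) | q.fst ∈ K₁ ∧ q.snd ∈ K₂} with hEp
  set f : F → WithLp 2 (E × F) :=
    fun z => (WithLp.equiv 2 (E × F)).symm (α • u₀, (1-α) • z) with hf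
  have hcont : Continuous f :=
    (WithLp.prod_continuous_toLp 2 E F).comp
      (continuous_const.prodMk (continuous_const_smul (1-α)))
  have hmaps : Set.MapsTo f (affineSpan ℝ (extremalSection K₂) : Set F)
      (affineSpan ℝ Ep : Set (WithLp 2 (E × F))) := by
    intro z hz
    have hz' : z ∈ affineSpan ℝ (extremalSection K₂) := hz
    refine affineSpan_induction (p := fun z => f z ∈ affineSpan ℝ Ep) hz' ?_ ?_
    · intro v hv
      have hP : (WithLp.equiv 2 (E × F)).symm (u₀, 0) ∈ Ep :=
        left_mem_extremalSection_prod hcone₂ hpointed₂ h0₂ hu₀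
      have hQ : (WithLp.equiv 2 (E × F)).symm (0, v) ∈ Ep :=
        right_mem_extremalSection_prod hcone₁ hpointed₁ h0₁ hv
      have key : f v = (1-α) • (((WithLp.equiv 2 (E × F)).symm (0, v) : WithLp 2 (E × F)) -ᵥ
          (WithLp.equiv 2 (E × F)).symm (u₀, 0)) +ᵥ (WithLp.equiv 2 (E × F)).symm (u₀, 0) := by
        refine (WithLp.ext_iff 2).mpr (Prod.ext ?_ ?_)
        · show α • u₀ = (1-α) • ((0:E) - u₀) + u₀
          module
        · show (1-α) • v = (1-α) • (v - 0) + 0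
          module
      show f v ∈ affineSpan ℝ Ep
      rw [key]
      exact AffineSubspace.smul_vsub_vadd_mem _ (1-α)
        (mem_affineSpan ℝ hQ) (mem_affineSpan ℝ hP) (mem_affineSpan ℝ hP)
    · intro c u v w pu pv pw
      have key : f (c • (u -ᵥ v) +ᵥ w) = c • (f u -ᵥ f v) +ᵥ f w := by
        refine (WithLp.ext_iff 2).mpr (Prod.ext ?_ ?_)
        · show α • u₀ = c • (α • u₀ - α • u₀) + α • u₀
          module
        · show (1-α) • (c • (u - v) + w) = c • ((1-α) • u - (1-α) • v) + (1-α) • w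
          module
      show f (c • (u -ᵥ v) +ᵥ w) ∈ affineSpan ℝ Ep
      rw [key]
      exact AffineSubspace.smul_vsub_vadd_mem _ c pu pv pw
  show f y ∈ closure (affineSpan ℝ Ep : Set (WithLp 2 (E × F)))
  exact map_mem_closure hcont hy hmaps

end ProdCone

theorem stmt16 {n₁ n₂ : ℕ}
    (K₁ : Set (EuclideanSpace ℝ (Fin n₁))) (K₂ : Set (EuclideanSpace ℝ (Fin n₂)))
    (hclosed₁ : IsClosed K₁) (hconv₁ : Convex ℝ K₁)
    (hcone₁ : ∀ t : ℝ, 0 ≤ t → ∀ x ∈ K₁, t • x ∈ K₁)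
    (hpointed₁ : K₁ ∩ (-K₁) ⊆ {0}) (hnontriv₁ : K₁ ≠ {0})
    (hclosed₂ : IsClosed K₂) (hconv₂ : Convex ℝ K₂)
    (hcone₂ : ∀ t : ℝ, 0 ≤ t → ∀ x ∈ K₂, t • x ∈ K₂)
    (hpointed₂ : K₂ ∩ (-K₂) ⊆ {0}) (hnontriv₂ : K₂ ≠ {0})
    (d₁ : EuclideanSpace ℝ (Fin n₁)) (d₂ : EuclideanSpace ℝ (Fin n₂))
    (h₁ : IsCircumcentricDir K₁ d₁) (h₂ : IsCircumcentricDir K₂ d₂)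
    (hd₁ : d₁ ≠ 0) (hd₂ : d₂ ≠ 0)
    (d : WithLp 2 (EuclideanSpace ℝ (Fin n₁) × EuclideanSpace ℝ (Fin n₂)))
    (hd : IsCircumcentricDir
      {q : WithLp 2 (EuclideanSpace ℝ (Fin n₁) × EuclideanSpace ℝ (Fin n₂)) |
        (WithLp.equiv 2 (EuclideanSpace ℝ (Fin n₁) × EuclideanSpace ℝ (Fin n₂)) q).1 ∈ K₁ ∧
        (WithLp.equiv 2 (EuclideanSpace ℝ (Fin n₁) × EuclideanSpace ℝ (Fin n₂)) q).2 ∈ K₂} d) :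
    d = (WithLp.equiv 2 (EuclideanSpace ℝ (Fin n₁) × EuclideanSpace ℝ (Fin n₂))).symm
        ((‖d₂‖ ^ 2 / (‖d₁‖ ^ 2 + ‖d₂‖ ^ 2)) • d₁, (‖d₁‖ ^ 2 / (‖d₁‖ ^ 2 + ‖d₂‖ ^ 2)) • d₂) ∧
    1 / ‖d‖ ^ 2 = 1 / ‖d₁‖ ^ 2 + 1 / ‖d₂‖ ^ 2 := by
  have hdKp : IsCircumcentricDir
      {q : WithLp 2 (EuclideanSpace ℝ (Fin n₁) × EuclideanSpace ℝ (Fin n₂)) | q.fst ∈ K₁ ∧ q.snd ∈ K₂} d := hd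
  have hδ₁ : (0:ℝ) < ‖d₁‖ ^ 2 := pow_pos (norm_pos_iff.mpr hd₁) 2
  have hδ₂ : (0:ℝ) < ‖d₂‖ ^ 2 := pow_pos (norm_pos_iff.mpr hd₂) 2
  have hσ : (0:ℝ) < ‖d₁‖ ^ 2 + ‖d₂‖ ^ 2 := by linarith
  set α : ℝ := ‖d₂‖ ^ 2 / (‖d₁‖ ^ 2 + ‖d₂‖ ^ 2) with hα
  have h1α : 1 - α = ‖d₁‖ ^ 2 / (‖d₁‖ ^ 2 + ‖d₂‖ ^ 2) := by
    rw [hα]; field_simp; ring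
  obtain ⟨u₀, hu₀⟩ := nonempty_of_mem_closure_affineSpan h₁.1
  obtain ⟨v₀, hv₀⟩ := nonempty_of_mem_closure_affineSpan h₂.1
  have h0₁ : (0 : EuclideanSpace ℝ (Fin n₁)) ∈ K₁ := hu₀.2.1 ⟨0, le_refl 0, (zero_smul ℝ u₀).symm⟩
  have h0₂ : (0 : EuclideanSpace ℝ (Fin n₂)) ∈ K₂ := hv₀.2.1 ⟨0, le_refl 0, (zero_smul ℝ v₀).symm⟩
  set d' : WithLp 2 (EuclideanSpace ℝ (Fin n₁) × EuclideanSpace ℝ (Fin n₂)) :=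
    (WithLp.equiv 2 (EuclideanSpace ℝ (Fin n₁) × EuclideanSpace ℝ (Fin n₂))).symm (α • d₁, (1-α) • d₂) with hd'def
  have hd'norm : ‖d'‖ ^ 2 = ‖d₁‖ ^ 2 * ‖d₂‖ ^ 2 / (‖d₁‖ ^ 2 + ‖d₂‖ ^ 2) := by
    rw [WithLp.prod_norm_sq_eq_of_L2]
    show ‖α • d₁‖ ^ 2 + ‖(1-α) • d₂‖ ^ 2 = _
    rw [norm_smul, norm_smul, mul_pow, mul_pow, Real.norm_eq_abs, Real.norm_eq_abs,
      sq_abs, sq_abs, hα]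
    field_simp
    ring
  have hcirc : IsCircumcentricDir
      {q : WithLp 2 (EuclideanSpace ℝ (Fin n₁) × EuclideanSpace ℝ (Fin n₂)) | q.fst ∈ K₁ ∧ q.snd ∈ K₂} d' := by
    constructor
    · have hp := left_map_closure_affineSpan hcone₁ hpointed₁ h0₁ hcone₂ hpointed₂ h0₂
        hv₀ α h₁.1
      have hq := right_map_closure_affineSpan hcone₁ hpointed₁ h0₁ hcone₂ hpointed₂ h0₂
        hu₀ α h₂.1
      have hu₀' : u₀ ∈ closure (affineSpan ℝ (extremalSection K₁) : Set (EuclideanSpace ℝ (Fin n₁))) :=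
        subset_closure (subset_affineSpan ℝ _ hu₀)
      have hr := left_map_closure_affineSpan hcone₁ hpointed₁ h0₁ hcone₂ hpointed₂ h0₂
        hv₀ α hu₀'
      have key : -d' = (WithLp.equiv 2 (EuclideanSpace ℝ (Fin n₁) × EuclideanSpace ℝ (Fin n₂))).symm (α • (-d₁), (1-α) • v₀)
          + (WithLp.equiv 2 (EuclideanSpace ℝ (Fin n₁) × EuclideanSpace ℝ (Fin n₂))).symm (α • u₀, (1-α) • (-d₂))
          - (WithLp.equiv 2 (EuclideanSpace ℝ (Fin n₁) × EuclideanSpace ℝ (Fin n₂))).symm (α • u₀, (1-α) • v₀) := by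
        refine (WithLp.ext_iff 2).mpr (Prod.ext ?_ ?_)
        · show -(α • d₁) = α • (-d₁) + α • u₀ - α • u₀
          module
        · show -((1-α) • d₂) = (1-α) • v₀ + (1-α) • (-d₂) - (1-α) • v₀
          module
      rw [key]
      exact add_sub_mem_closure_affineSpan hp hq hr
    · have hinner : ∀ z ∈ extremalSection
          {q : WithLp 2 (EuclideanSpace ℝ (Fin n₁) × EuclideanSpace ℝ (Fin n₂)) | q.fst ∈ K₁ ∧ q.snd ∈ K₂},
          ⟪z, d'⟫ = -(‖d₁‖ ^ 2 * ‖d₂‖ ^ 2 / (‖d₁‖ ^ 2 + ‖d₂‖ ^ 2)) := by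
        intro z hz
        rw [WithLp.prod_inner_apply]
        rcases extremalSection_prod_subset hcone₁ h0₁ hcone₂ h0₂ hz with
          ⟨hz1, hz2⟩ | ⟨hz1, hz2⟩
        · have hz1' : ⟪z.fst, d₁⟫ = -‖d₁‖ ^ 2 := by
            have h5 := h₁.2 z.fst (subset_closure (subset_affineSpan ℝ _ hz1))
            rw [inner_add_left, real_inner_self_eq_norm_sq] at h5
            linarith
          show ⟪z.fst, α • d₁⟫ + ⟪z.snd, (1-α) • d₂⟫ = _
          rw [hz2, inner_zero_left, add_zero, real_inner_smul_right, hz1', hα]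
          ring
        · have hz2' : ⟪z.snd, d₂⟫ = -‖d₂‖ ^ 2 := by
            have h5 := h₂.2 z.snd (subset_closure (subset_affineSpan ℝ _ hz2))
            rw [inner_add_left, real_inner_self_eq_norm_sq] at h5
            linarith
          show ⟪z.fst, α • d₁⟫ + ⟪z.snd, (1-α) • d₂⟫ = _
          rw [hz1, inner_zero_left, zero_add, real_inner_smul_right, hz2', h1α]
          ring
      intro x hx
      have hx' := inner_eq_on_closure_affineSpan hinner x hx
      rw [inner_add_left, hx', real_inner_self_eq_norm_sq, hd'norm]
      ring
  have hdd : d = d' := circ_unique hdKp hcirc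
  constructor
  · rw [hdd, hd'def, h1α]
  · rw [hdd, hd'norm]
    field_simp
    ring
end

section
/- Let h : R^n → R be a differentiable strictly convex function with ∇h(0) = 0, let u^1,...,u^p be unit vectors whose affine hull A does not contain 0, and let c_h ∈ A be a minimizer of h over A. Set κ_h = ⟨∇h(c_h), c_h⟩. Then ⟨∇h(c_h), u^i⟩ = κ_h for every i, κ_h > 0, and for d_h := -∇h(c_h), every v with ‖v‖ ≤ κ_h satisfies ⟨d_h + v, u^i⟩ ≤ 0 for all i (hence d_h + v lies in the polar of cone{u^1,...,u^p}). -/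
open scoped RealInnerProductSpace

/-- The derivative of `t ↦ h (t • w + a)` is the inner product of the gradient with `w`. -/
lemma aux_hasDerivAt {n : ℕ} (h : EuclideanSpace ℝ (Fin n) → ℝ)
    (hdiff : Differentiable ℝ h) (w a : EuclideanSpace ℝ (Fin n)) (t₀ : ℝ) :
    HasDerivAt (fun t : ℝ => h (t • w + a)) ⟪gradient h (t₀ • w + a), w⟫ t₀ := by
  have hF : HasFDerivAt h
      ((InnerProductSpace.toDual ℝ _) (gradient h (t₀ • w + a))) (t₀ • w + a) := by
    have := (hdiff (t₀ • w + a)).hasGradientAt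
    rwa [hasGradientAt_iff_hasFDerivAt] at this
  have hline : HasDerivAt (fun t : ℝ => t • w + a) w t₀ := by
    simpa using ((hasDerivAt_id t₀).smul_const w).add_const a
  have := hF.comp_hasDerivAt t₀ hline
  simpa [InnerProductSpace.toDual_apply_apply, Function.comp_def] using this

theorem stmt18 {n p : ℕ} (h : EuclideanSpace ℝ (Fin n) → ℝ)
    (hdiff : Differentiable ℝ h) (hconv : StrictConvexOn ℝ Set.univ h)
    (hgrad0 : gradient h 0 = 0)
    (u : Fin p → EuclideanSpace ℝ (Fin n)) (hu : ∀ i, ‖u i‖ = 1)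
    (h0 : (0 : EuclideanSpace ℝ (Fin n)) ∉ affineSpan ℝ (Set.range u))
    (c : EuclideanSpace ℝ (Fin n)) (hc : c ∈ affineSpan ℝ (Set.range u))
    (hmin : ∀ x ∈ affineSpan ℝ (Set.range u), h c ≤ h x) :
    (∀ i, ⟪gradient h c, u i⟫ = ⟪gradient h c, c⟫) ∧
    0 < ⟪gradient h c, c⟫ ∧
    ∀ v : EuclideanSpace ℝ (Fin n), ‖v‖ ≤ ⟪gradient h c, c⟫ →
      ∀ i, ⟪-gradient h c + v, u i⟫ ≤ 0 := by
  have hcne : c ≠ 0 := fun hh => h0 (hh ▸ hc)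
  -- optimality: gradient is orthogonal to directions in the affine span
  have key : ∀ x ∈ affineSpan ℝ (Set.range u), ⟪gradient h c, x - c⟫ = 0 := by
    intro x hx
    have hder : HasDerivAt (fun t : ℝ => h (t • (x - c) + c))
        ⟪gradient h c, x - c⟫ 0 := by
      have := aux_hasDerivAt h hdiff (x - c) c 0
      simpa using this
    have hminloc : IsLocalMin (fun t : ℝ => h (t • (x - c) + c)) 0 := by
      apply Filter.Eventually.of_forall
      intro t
      have hmem : t • (x - c) + c ∈ affineSpan ℝ (Set.range u) := by
        have := AffineSubspace.smul_vsub_vadd_mem (affineSpan ℝ (Set.range u)) t hx hc hc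
        simpa [vsub_eq_sub, vadd_eq_add] using this
      simpa using hmin _ hmem
    exact hminloc.hasDerivAt_eq_zero hder
  have part1 : ∀ i, ⟪gradient h c, u i⟫ = ⟪gradient h c, c⟫ := by
    intro i
    have := key (u i) (subset_affineSpan ℝ _ ⟨i, rfl⟩)
    rw [inner_sub_right] at this
    linarith
  -- positivity of κ via the strictly convex 1D restriction t ↦ h (t • c)
  have part2 : 0 < ⟪gradient h c, c⟫ := by
    set φ : ℝ → ℝ := fun t => h (t • c) with hφ
    have hφconv : StrictConvexOn ℝ Set.univ φ := by
      refine ⟨convex_univ, fun x _ y _ hxy a b ha hb hab => ?_⟩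
      have hxyne : x • c ≠ y • c := fun hh =>
        hxy (smul_left_injective ℝ hcne hh)
      have := hconv.2 (Set.mem_univ (x • c)) (Set.mem_univ (y • c)) hxyne ha hb hab
      simpa [hφ, add_smul, smul_smul] using this
    have hd0 : HasDerivAt φ 0 0 := by
      have := aux_hasDerivAt h hdiff c 0 0
      simpa [hgrad0] using this
    have hd1 : HasDerivAt φ ⟪gradient h c, c⟫ 1 := by
      have := aux_hasDerivAt h hdiff c 0 1
      simpa using this
    have h01 : (0 : ℝ) < 1 := one_pos
    have l1 : (0 : ℝ) < slope φ 0 1 :=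
      hφconv.lt_slope_of_hasDerivAt (Set.mem_univ 0) (Set.mem_univ 1) h01 hd0
    have l2 : slope φ 0 1 < ⟪gradient h c, c⟫ :=
      hφconv.slope_lt_of_hasDerivAt (Set.mem_univ 0) (Set.mem_univ 1) h01 hd1
    linarith
  refine ⟨part1, part2, ?_⟩
  intro v hv i
  have hcs : ⟪v, u i⟫ ≤ ‖v‖ := by
    have := real_inner_le_norm v (u i)
    simpa [hu i] using this
  have : ⟪-gradient h c + v, u i⟫ = -⟪gradient h c, c⟫ + ⟪v, u i⟫ := by
    rw [inner_add_left, inner_neg_left, part1 i]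
  rw [this]
  linarith
end

section
/- For h_p(x) = (1/p)‖x‖^p with p ≥ 2 on R^n, and unit vectors u^1,...,u^p' with affine hull avoiding 0, let d = -proj_{aff}(0) be the Euclidean circumcentric direction. Then the Bregman direction is d_{h_p} = ‖d‖^{p-2} d, the margin is κ_{h_p} = ‖d‖^p, and every v with ‖v‖ ≤ ‖d‖^p satisfies ‖d‖^{p-2} d + v ∈ K°, where K = cone{u^1,...,u^{p'}}. -/
open scoped RealInnerProductSpace

theorem stmt19 {n p' : ℕ} (p : ℝ) (hp : 2 ≤ p)
    (u : Fin p' → EuclideanSpace ℝ (Fin n)) (hu : ∀ i, ‖u i‖ = 1)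
    (h0 : (0 : EuclideanSpace ℝ (Fin n)) ∉ affineSpan ℝ (Set.range u))
    (d : EuclideanSpace ℝ (Fin n))
    (hmem : -d ∈ affineSpan ℝ (Set.range u))
    (horth : ∀ x ∈ affineSpan ℝ (Set.range u), ⟪x + d, d⟫ = 0) :
    gradient (fun x : EuclideanSpace ℝ (Fin n) => ‖x‖ ^ p / p) (-d) =
      -((‖d‖ ^ (p - 2)) • d) ∧
    ∀ v : EuclideanSpace ℝ (Fin n), ‖v‖ ≤ ‖d‖ ^ p →
      ∀ z ∈ {z : EuclideanSpace ℝ (Fin n) |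
          ∃ c : Fin p' → ℝ, (∀ i, 0 ≤ c i) ∧ z = ∑ i, c i • u i},
        ⟪(‖d‖ ^ (p - 2)) • d + v, z⟫ ≤ 0 := by
  have hp0 : (0 : ℝ) < p := by linarith
  have h1 : (1 : ℝ) < p := by linarith
  have hd : d ≠ 0 := by
    intro h
    apply h0
    simpa [h] using hmem
  have hdpos : (0 : ℝ) < ‖d‖ := norm_pos_iff.mpr hd
  -- inner products with generators
  have hui : ∀ i, ⟪d, u i⟫ = -(‖d‖ ^ (2 : ℕ)) := by
    intro i
    have h := horth (u i) (subset_affineSpan ℝ _ (Set.mem_range_self i))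
    rw [inner_add_left, real_inner_self_eq_norm_sq] at h
    rw [real_inner_comm]
    linarith
  constructor
  · -- gradient computation
    have key : HasFDerivAt (fun x : EuclideanSpace ℝ (Fin n) => ‖x‖ ^ p / p)
        (InnerProductSpace.toDual ℝ _ (-((‖d‖ ^ (p - 2)) • d))) (-d) := by
      simp only [div_eq_mul_inv]
      convert (hasFDerivAt_norm_rpow (-d) h1).mul_const p⁻¹ using 1
      case e'_4 => rfl
      case e'_8 => rfl
      case e'_9 => rfl
      ext y
      simp only [InnerProductSpace.toDual_apply_apply, ContinuousLinearMap.coe_smul',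
        Pi.smul_apply, innerSL_apply_apply, inner_neg_left, inner_smul_left,
        norm_neg, smul_eq_mul, RCLike.star_def, conj_trivial, real_inner_smul_left]
      field_simp
    exact (hasGradientAt_iff_hasFDerivAt.mpr key).gradient
  · rintro v hv z ⟨c, hc, rfl⟩
    rw [inner_sum]
    apply Finset.sum_nonpos
    intro i _
    rw [real_inner_smul_right]
    have h2 : ⟪(‖d‖ ^ (p - 2)) • d + v, u i⟫ ≤ 0 := by
      rw [inner_add_left, real_inner_smul_left, hui i]
      have hpow : ‖d‖ ^ (p - 2) * ‖d‖ ^ (2 : ℕ) = ‖d‖ ^ p := by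
        rw [← Real.rpow_natCast ‖d‖ 2, ← Real.rpow_add hdpos]
        norm_num
      have hvi : ⟪v, u i⟫ ≤ ‖d‖ ^ p := by
        calc ⟪v, u i⟫ ≤ ‖v‖ * ‖u i‖ := real_inner_le_norm v (u i)
          _ = ‖v‖ := by rw [hu i, mul_one]
          _ ≤ ‖d‖ ^ p := hv
      nlinarith [hpow]
    exact mul_nonpos_of_nonneg_of_nonpos (hc i) h2
end
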